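/- For all integers r ≥ 2 and k ≥ 1 there exists t_0 such that for every t ≥ t_0 there is a coloring c : [t] × [t] → [r] with the following property: for all subsets X, Y ⊆ [t] with |X| ≥ t/(rk)^k and |Y| ≥ t/(rk)^k, and for every color i ∈ [r], there exist x ∈ X and y ∈ Y with c(x, y) = i. -/

import Mathlib

open Finset

lemma count_avoid {α : Type*} [Fintype α] [DecidableEq α] {r : ℕ} (S : Finset α) (i : Fin r) :
    (univ.filter fun f : α → Fin r => ∀ a ∈ S, f a ≠ i).card
      = (r - 1) ^ S.card * r ^ (Fintype.card α - S.card) := by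
  have hset : (univ.filter fun f : α → Fin r => ∀ a ∈ S, f a ≠ i)
      = Fintype.piFinset (fun a => if a ∈ S then ({i} : Finset (Fin r))ᶜ else univ) := by
    ext f
    simp only [mem_filter, mem_univ, true_and, Fintype.mem_piFinset]
    constructor
    · intro h a
      by_cases ha : a ∈ S
      · simp [ha, h a ha]
      · simp [ha]
    · intro h a ha
      have := h a
      simp [ha] at this
      exact this
  rw [hset, Fintype.card_piFinset]
  have hcard : ∀ a : α, (if a ∈ S then ({i} : Finset (Fin r))ᶜ else univ).card
      = if a ∈ S then r - 1 else r := by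
    intro a
    by_cases ha : a ∈ S <;> simp [ha, Finset.card_compl]
  simp only [hcard]
  rw [← Finset.prod_mul_prod_compl S]
  rw [Finset.prod_congr rfl (fun a ha => if_pos ha),
      Finset.prod_congr rfl (fun a ha => if_neg (by simpa using ha))]
  simp [Finset.card_compl]

lemma choose_le_two_pow' (t m : ℕ) (h : m ≤ t) : t.choose m ≤ 2 ^ t := by
  rw [← Nat.sum_range_choose t]
  exact Finset.single_le_sum (f := fun j => t.choose j) (fun j _ => Nat.zero_le _)
    (Finset.mem_range.mpr (Nat.lt_succ_of_le h))

lemma main_ineq (r M m t : ℕ) (hr : 2 ≤ r)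
    (hmL : (r - 1) * 4 ^ (M + 1) + r ≤ m) (hmt : m ≤ t) (htm : t ≤ m * M) :
    (t.choose m) * (t.choose m) * r * ((r - 1) ^ (m * m) * r ^ (t * t - m * m)) < r ^ (t * t) := by
  have hmm : m * m ≤ t * t := Nat.mul_le_mul hmt hmt
  have hrpos : 0 < r := by omega
  have hsplit : r ^ (t * t) = r ^ (m * m) * r ^ (t * t - m * m) := by
    rw [← pow_add]; congr 1; omega
  rw [hsplit, ← mul_assoc]
  refine Nat.mul_lt_mul_of_lt_of_le ?_ le_rfl (pow_pos hrpos _)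
  -- now in ℕ: choose² * r * (r-1)^(m*m) < r^(m*m); prove over ℝ
  have key : ((t.choose m : ℝ) * (t.choose m) * r * ((r : ℝ) - 1) ^ (m * m)) < (r : ℝ) ^ (m * m) := by
    set s : ℝ := (r : ℝ) - 1 with hs
    have hs1 : (1 : ℝ) ≤ s := by
      have : (2 : ℝ) ≤ (r : ℝ) := by exact_mod_cast hr
      linarith
    have hspos : (0 : ℝ) < s := by linarith
    have hrm : r ≤ m := le_trans (Nat.le_add_left _ _) hmL
    have hm1 : 1 ≤ m := by omega
    -- step 1 : (s+1)^m ≥ s^m * (1 + m/s)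
    have h1 : s ^ m * (1 + (m : ℝ) / s) ≤ (s + 1) ^ m := by
      have hb : (1 : ℝ) + (m : ℝ) * (1 / s) ≤ (1 + 1 / s) ^ m := by
        refine one_add_mul_le_pow ?_ m
        have : (0 : ℝ) < 1 / s := by positivity
        linarith
      have hexp : (s + 1) ^ m = s ^ m * (1 + 1 / s) ^ m := by
        rw [← mul_pow]
        congr 1
        field_simp
      rw [hexp]
      have : (1 : ℝ) + (m : ℝ) / s = 1 + (m : ℝ) * (1 / s) := by ring
      rw [this]
      exact mul_le_mul_of_nonneg_left hb (by positivity)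
    -- step 2 : (s+1)^(m*m) ≥ s^(m*m) * (m/s)^m
    have h2 : s ^ (m * m) * ((m : ℝ) / s) ^ m ≤ (s + 1) ^ (m * m) := by
      have hA : (s ^ m * ((m : ℝ) / s)) ^ m ≤ ((s + 1) ^ m) ^ m := by
        refine pow_le_pow_left₀ (by positivity) ?_ m
        refine le_trans ?_ h1
        have hds : (m : ℝ) / s ≤ 1 + (m : ℝ) / s := by linarith
        exact mul_le_mul_of_nonneg_left hds (by positivity)
      calc s ^ (m * m) * ((m : ℝ) / s) ^ m
          = (s ^ m * ((m : ℝ) / s)) ^ m := by rw [mul_pow, ← pow_mul]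
        _ ≤ ((s + 1) ^ m) ^ m := hA
        _ = (s + 1) ^ (m * m) := by rw [← pow_mul]
    -- step 3 : (m/s)^m ≥ 4^((M+1)*m) and this beats 4^t * r
    have hms : (4 : ℝ) ^ (M + 1) ≤ (m : ℝ) / s := by
      rw [le_div_iff₀ hspos]
      have : ((r - 1) * 4 ^ (M + 1) : ℕ) ≤ m := le_trans (Nat.le_add_right _ _) hmL
      have hcast : (((r - 1) * 4 ^ (M + 1) : ℕ) : ℝ) = s * 4 ^ (M + 1) := by
        push_cast [Nat.cast_sub (by omega : 1 ≤ r)]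
        ring
      calc (4 : ℝ) ^ (M + 1) * s = s * 4 ^ (M + 1) := by ring
        _ = (((r - 1) * 4 ^ (M + 1) : ℕ) : ℝ) := hcast.symm
        _ ≤ (m : ℝ) := by exact_mod_cast this
    have h3 : (4 : ℝ) ^ ((M + 1) * m) ≤ ((m : ℝ) / s) ^ m := by
      rw [pow_mul]
      exact pow_le_pow_left₀ (by positivity) hms m
    have hr4m : (r : ℝ) < (4 : ℝ) ^ m := by
      have : r < 4 ^ m := lt_of_le_of_lt hrm (lt_of_lt_of_le (Nat.lt_two_pow_self (n := m))
        (Nat.pow_le_pow_left (by norm_num) m))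
      exact_mod_cast this
    have h4tm : (4 : ℝ) ^ t * (4 : ℝ) ^ m ≤ (4 : ℝ) ^ ((M + 1) * m) := by
      rw [← pow_add]
      apply pow_le_pow_right₀ (by norm_num)
      have h5 : (M + 1) * m = m * M + m := by ring
      omega
    have hfinal : (4 : ℝ) ^ t * (r : ℝ) < ((m : ℝ) / s) ^ m := by
      calc (4 : ℝ) ^ t * (r : ℝ) < (4 : ℝ) ^ t * (4 : ℝ) ^ m := by
            exact mul_lt_mul_of_pos_left hr4m (by positivity)
        _ ≤ (4 : ℝ) ^ ((M + 1) * m) := h4tm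
        _ ≤ ((m : ℝ) / s) ^ m := h3
    -- choose bound
    have hC : (t.choose m : ℝ) * (t.choose m) ≤ (4 : ℝ) ^ t := by
      have h2t : t.choose m ≤ 2 ^ t := choose_le_two_pow' t m hmt
      have : (t.choose m) * (t.choose m) ≤ 2 ^ t * 2 ^ t := Nat.mul_le_mul h2t h2t
      have h4 : (2 : ℕ) ^ t * 2 ^ t = 4 ^ t := by
        rw [← Nat.mul_pow]
      calc (t.choose m : ℝ) * (t.choose m) = (((t.choose m) * (t.choose m) : ℕ) : ℝ) := by push_cast; ring
        _ ≤ (((2 : ℕ) ^ t * 2 ^ t : ℕ) : ℝ) := by exact_mod_cast this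
        _ = (4 : ℝ) ^ t := by rw [h4]; push_cast; ring
    have hspow : (0 : ℝ) < s ^ (m * m) := by positivity
    calc (t.choose m : ℝ) * (t.choose m) * r * s ^ (m * m)
        ≤ (4 : ℝ) ^ t * r * s ^ (m * m) := by
          exact mul_le_mul_of_nonneg_right (mul_le_mul_of_nonneg_right hC (by positivity)) (le_of_lt hspow)
      _ < ((m : ℝ) / s) ^ m * s ^ (m * m) := by
          exact mul_lt_mul_of_pos_right hfinal hspow
      _ = s ^ (m * m) * ((m : ℝ) / s) ^ m := by ring
      _ ≤ (s + 1) ^ (m * m) := h2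
      _ = (r : ℝ) ^ (m * m) := by rw [hs]; ring_nf
  -- transfer back to ℕ
  have hcast : (((t.choose m) * (t.choose m) * r * (r - 1) ^ (m * m) : ℕ) : ℝ)
      = (t.choose m : ℝ) * (t.choose m) * r * ((r : ℝ) - 1) ^ (m * m) := by
    push_cast [Nat.cast_sub (by omega : 1 ≤ r)]
    ring
  have : (((t.choose m) * (t.choose m) * r * (r - 1) ^ (m * m) : ℕ) : ℝ) < ((r ^ (m * m) : ℕ) : ℝ) := by
    rw [hcast]; push_cast; exact key
  exact_mod_cast this

/-- Claim 2.1: for `r ≥ 2`, `k ≥ 1` and `t` large enough, there is an `r`-coloring of the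
edges of the complete bipartite graph `K_{t,t}` such that between any two sets `X`, `Y` of
size at least `t/(rk)^k` on opposite sides, every color appears. -/
theorem random_coloring_claim (r k : ℕ) (hr : 2 ≤ r) (hk : 1 ≤ k) :
    ∃ t₀ : ℕ, ∀ t ≥ t₀, ∃ c : Fin t × Fin t → Fin r,
      ∀ X Y : Finset (Fin t),
        ((t : ℝ)/((r : ℝ)*k)^k ≤ (X.card : ℝ)) →
        ((t : ℝ)/((r : ℝ)*k)^k ≤ (Y.card : ℝ)) →
        ∀ i : Fin r, ∃ x ∈ X, ∃ y ∈ Y, c (x, y) = i := by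
  classical
  set M : ℕ := (r * k) ^ k with hMdef
  have hMpos : 0 < M := by positivity
  have hMcast : ((r : ℝ) * k) ^ k = (M : ℝ) := by
    rw [hMdef]; push_cast; ring
  set L : ℕ := (r - 1) * 4 ^ (M + 1) + r with hLdef
  refine ⟨M * L, fun t ht => ?_⟩
  set m : ℕ := ⌈(t : ℝ) / M⌉₊ with hmdef
  have hMR : (0 : ℝ) < (M : ℝ) := by exact_mod_cast hMpos
  have hmt : m ≤ t := by
    rw [hmdef, Nat.ceil_le]
    exact div_le_self (by positivity) (by exact_mod_cast hMpos)
  have hLm : L ≤ m := by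
    have h1 : (L : ℝ) ≤ (t : ℝ) / M := by
      rw [le_div_iff₀ hMR]
      have : (M * L : ℕ) ≤ t := ht
      calc (L : ℝ) * M = ((M * L : ℕ) : ℝ) := by push_cast; ring
        _ ≤ (t : ℝ) := by exact_mod_cast this
    have h2 : (t : ℝ) / M ≤ (m : ℝ) := Nat.le_ceil _
    exact_mod_cast le_trans h1 h2
  have htmM : t ≤ m * M := by
    have h2 : (t : ℝ) / M ≤ (m : ℝ) := Nat.le_ceil _
    have : (t : ℝ) ≤ (m : ℝ) * M := by
      rw [div_le_iff₀ hMR] at h2; exact h2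
    exact_mod_cast this
  by_contra hcon
  push_neg at hcon
  -- every coloring is bad; derive a counting contradiction
  have hsub : (univ : Finset (Fin t × Fin t → Fin r)) ⊆
      (((univ.powersetCard m) ×ˢ (univ.powersetCard m)) ×ˢ (univ : Finset (Fin r))).biUnion
        (fun p => univ.filter fun c : Fin t × Fin t → Fin r =>
          ∀ a ∈ p.1.1 ×ˢ p.1.2, c a ≠ p.2) := by
    intro c _
    obtain ⟨X, Y, hX, hY, i, hbad⟩ := hcon c
    have hXm : m ≤ X.card := by
      rw [hmdef, Nat.ceil_le]
      rwa [hMcast] at hX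
    have hYm : m ≤ Y.card := by
      rw [hmdef, Nat.ceil_le]
      rwa [hMcast] at hY
    obtain ⟨X', hX'sub, hX'card⟩ := Finset.exists_subset_card_eq hXm
    obtain ⟨Y', hY'sub, hY'card⟩ := Finset.exists_subset_card_eq hYm
    refine Finset.mem_biUnion.mpr ⟨((X', Y'), i), ?_, ?_⟩
    · simp [Finset.mem_product, Finset.mem_powersetCard_univ, hX'card, hY'card]
    · simp only [mem_filter, mem_univ, true_and]
      rintro ⟨x, y⟩ hxy
      rw [Finset.mem_product] at hxy
      exact hbad x (hX'sub hxy.1) y (hY'sub hxy.2)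
  -- counting
  have hcardle : (univ : Finset (Fin t × Fin t → Fin r)).card ≤
      (t.choose m) * (t.choose m) * r * ((r - 1) ^ (m * m) * r ^ (t * t - m * m)) := by
    refine le_trans (Finset.card_le_card hsub) ?_
    refine le_trans (Finset.card_biUnion_le) ?_
    have hterm : ∀ p ∈ ((univ.powersetCard m : Finset (Finset (Fin t))) ×ˢ (univ.powersetCard m)) ×ˢ
        (univ : Finset (Fin r)),
        (univ.filter fun c : Fin t × Fin t → Fin r => ∀ a ∈ p.1.1 ×ˢ p.1.2, c a ≠ p.2).card
          = (r - 1) ^ (m * m) * r ^ (t * t - m * m) := by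
      rintro ⟨⟨X, Y⟩, i⟩ hp
      simp only [Finset.mem_product, Finset.mem_powersetCard_univ] at hp
      have hS : (X ×ˢ Y).card = m * m := by
        rw [Finset.card_product, hp.1.1, hp.1.2]
      have := count_avoid (X ×ˢ Y) i
      rw [hS] at this
      simpa [Fintype.card_prod, Fintype.card_fin] using this
    rw [Finset.sum_congr rfl hterm, Finset.sum_const, smul_eq_mul]
    apply Nat.mul_le_mul_right
    rw [Finset.card_product, Finset.card_product, Finset.card_powersetCard, Finset.card_univ,
      Finset.card_univ, Fintype.card_fin, Fintype.card_fin]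
  have hcardeq : (univ : Finset (Fin t × Fin t → Fin r)).card = r ^ (t * t) := by
    rw [Finset.card_univ, Fintype.card_fun, Fintype.card_fin, Fintype.card_prod, Fintype.card_fin]
  have hlt := main_ineq r M m t hr (by rw [hLdef] at hLm; exact hLm) hmt htmM
  omega
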